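/- Let Y be a vector lattice and X a linear subspace of Y that is directed, order dense in Y, and generates Y as a vector lattice. Then for every y ∈ Y: 0 ≤ y if and only if for every two nonempty finite sets A, B ⊆ {x ∈ X | 0 ≤ x} with y = (sup A) − (sup B) (suprema in Y) one has Aᵘ ⊆ Bᵘ, where for M ⊆ X the set Mᵘ := {x ∈ X | ∀ m ∈ M, m ≤ x} denotes the upper bounds of M within X. -/

import Mathlib

open Finset in
private lemma sup'_image_add
    {Y : Type*} [Lattice Y] [AddCommGroup Y] [DecidableEq Y]
    [CovariantClass Y Y (· + ·) (· ≤ ·)]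
    (A : Finset Y) (hA : A.Nonempty) (c : Y) :
    (A.image (· + c)).sup' (hA.image _) id = A.sup' hA id + c := by
  classical
  apply le_antisymm
  · apply Finset.sup'_le
    intro x hx
    simp only [Finset.mem_image] at hx
    obtain ⟨a, ha, rfl⟩ := hx
    exact add_le_add_left (Finset.le_sup' id ha) c
  · rw [← le_sub_iff_add_le]
    apply Finset.sup'_le
    intro a ha
    rw [le_sub_iff_add_le]
    exact Finset.le_sup' (id : Y → Y) (Finset.mem_image_of_mem (· + c) ha)

/-- Let `Y` be a vector lattice and `X` a directed, order dense linear
subspace of `Y` that generates `Y` as a vector lattice. Then for every `y ∈ Y`: `0 ≤ y` iff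
for all nonempty finite sets `A, B ⊆ {x ∈ X | 0 ≤ x}` with `y = sup A - sup B` one has
`Aᵘ ⊆ Bᵘ`, the upper bounds being taken within `X`. -/
theorem statement3
    {Y : Type*} [Lattice Y] [AddCommGroup Y] [Module ℝ Y]
    [CovariantClass Y Y (· + ·) (· ≤ ·)] [PosSMulMono ℝ Y]
    (X : Submodule ℝ Y)
    (hdir : ∀ x ∈ X, ∀ y ∈ X, ∃ z ∈ X, x ≤ z ∧ y ≤ z)
    (hdense : ∀ y : Y, IsGLB {x : Y | x ∈ X ∧ y ≤ x} y)
    (hgen : ∀ y : Y, ∃ A B : Finset Y, ∃ hA : A.Nonempty, ∃ hB : B.Nonempty,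
      (↑A : Set Y) ⊆ (X : Set Y) ∧ (↑B : Set Y) ⊆ (X : Set Y) ∧
      y = A.sup' hA id - B.sup' hB id) :
    ∀ y : Y,
      0 ≤ y ↔
        ∀ (A B : Finset Y) (hA : A.Nonempty) (hB : B.Nonempty),
          (↑A : Set Y) ⊆ {x : Y | x ∈ X ∧ 0 ≤ x} →
          (↑B : Set Y) ⊆ {x : Y | x ∈ X ∧ 0 ≤ x} →
          y = A.sup' hA id - B.sup' hB id →
          {x : Y | x ∈ X ∧ ∀ a ∈ A, a ≤ x} ⊆ {x : Y | x ∈ X ∧ ∀ b ∈ B, b ≤ x} := by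
  classical
  -- upper bounds of finite subsets of X exist in X
  have bound : ∀ S : Finset Y, (↑S : Set Y) ⊆ (X : Set Y) →
      ∃ z ∈ X, (0 : Y) ≤ z ∧ ∀ s ∈ S, s ≤ z := by
    intro S
    induction S using Finset.induction with
    | empty => intro _; exact ⟨0, X.zero_mem, le_refl 0, by simp⟩
    | @insert a S ha ih =>
      intro hsub
      have haX : a ∈ X := hsub (by simp)
      have hSX : (↑S : Set Y) ⊆ (X : Set Y) := fun x hx => hsub (by simp [hx])
      obtain ⟨z, hzX, hz0, hz⟩ := ih hSX
      obtain ⟨w, hwX, haw, hzw⟩ := hdir a haX z hzX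
      refine ⟨w, hwX, hz0.trans hzw, ?_⟩
      intro s hs
      rcases Finset.mem_insert.mp hs with rfl | hs
      · exact haw
      · exact (hz s hs).trans hzw
  intro y
  constructor
  · -- forward
    intro hy A B hA hB hApos hBpos hrep x hx
    obtain ⟨hxX, hxA⟩ := hx
    have hsupA : A.sup' hA id ≤ x := Finset.sup'_le _ _ fun a ha => hxA a ha
    have hsupB : B.sup' hB id ≤ x := by
      have : B.sup' hB id ≤ A.sup' hA id := by
        have h' : B.sup' hB id = A.sup' hA id - y := by rw [hrep]; abel
        rw [h']
        exact sub_le_self _ hy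
      exact this.trans hsupA
    exact ⟨hxX, fun b hb => (Finset.le_sup' id hb).trans hsupB⟩
  · -- backward
    intro hcond
    obtain ⟨A, B, hA, hB, hAX, hBX, hrep⟩ := hgen y
    -- find c ∈ X with c ≥ 0 and c ≥ -s for all s ∈ A ∪ B
    obtain ⟨c, hcX, hc0, hc⟩ := bound ((A ∪ B).image Neg.neg) (by
      intro x hx
      simp only [Finset.coe_image, Set.mem_image, Finset.mem_coe, Finset.mem_union] at hx
      obtain ⟨s, hs, rfl⟩ := hx
      rcases hs with hs | hs
      · exact X.neg_mem (hAX hs)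
      · exact X.neg_mem (hBX hs))
    have hcge : ∀ s ∈ A ∪ B, -s ≤ c := by
      intro s hs
      exact hc (-s) (Finset.mem_image_of_mem _ hs)
    set A' := A.image (· + c) with hA'def
    set B' := B.image (· + c) with hB'def
    have hA' : A'.Nonempty := hA.image _
    have hB' : B'.Nonempty := hB.image _
    have hApos : (↑A' : Set Y) ⊆ {x : Y | x ∈ X ∧ 0 ≤ x} := by
      intro x hx
      simp only [hA'def, Finset.coe_image, Set.mem_image, Finset.mem_coe] at hx
      obtain ⟨a, ha, rfl⟩ := hx
      refine ⟨X.add_mem (hAX ha) hcX, ?_⟩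
      have := hcge a (Finset.mem_union_left _ ha)
      calc (0:Y) = -a + a := by abel
        _ ≤ c + a := add_le_add_left this a
        _ = a + c := by abel
    have hBpos : (↑B' : Set Y) ⊆ {x : Y | x ∈ X ∧ 0 ≤ x} := by
      intro x hx
      simp only [hB'def, Finset.coe_image, Set.mem_image, Finset.mem_coe] at hx
      obtain ⟨b, hb, rfl⟩ := hx
      refine ⟨X.add_mem (hBX hb) hcX, ?_⟩
      have := hcge b (Finset.mem_union_right _ hb)
      calc (0:Y) = -b + b := by abel
        _ ≤ c + b := add_le_add_left this b
        _ = b + c := by abel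
    have hsupA' : A'.sup' hA' id = A.sup' hA id + c := sup'_image_add A hA c
    have hsupB' : B'.sup' hB' id = B.sup' hB id + c := sup'_image_add B hB c
    have hrep' : y = A'.sup' hA' id - B'.sup' hB' id := by
      rw [hsupA', hsupB', hrep]; abel
    have hsub := hcond A' B' hA' hB' hApos hBpos hrep'
    -- conclude sup B' ≤ sup A'
    have hlb : B'.sup' hB' id ∈ lowerBounds {x : Y | x ∈ X ∧ A'.sup' hA' id ≤ x} := by
      intro x hx
      obtain ⟨hxX, hxge⟩ := hx
      have hxA' : x ∈ {x : Y | x ∈ X ∧ ∀ a ∈ A', a ≤ x} :=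
        ⟨hxX, fun a ha => (Finset.le_sup' id ha).trans hxge⟩
      obtain ⟨_, hxB'⟩ := hsub hxA'
      exact Finset.sup'_le _ _ fun b hb => hxB' b hb
    have : B'.sup' hB' id ≤ A'.sup' hA' id := (hdense (A'.sup' hA' id)).2 hlb
    rw [hrep']
    exact sub_nonneg.mpr this
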